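/- For all natural numbers k and n with k < n and k * n even, there exists a k-regular simple graph on n vertices. -/

import Mathlib

theorem aux_regular (k n : ℕ) (hkn : k < n) (heven : Even (k * n)) :
    ∃ G : SimpleGraph (ZMod n), ∀ v : ZMod n, Nat.card (G.neighborSet v) = k := by
  have hn : 0 < n := lt_of_le_of_lt (Nat.zero_le k) hkn
  haveI : NeZero n := ⟨hn.ne'⟩
  set m := k / 2 with hm
  have h2m : 2 * m ≤ k := Nat.mul_div_le k 2
  -- connection set as naturals
  set T : Finset ℕ :=
    (Finset.Icc 1 m ∪ (Finset.Icc 1 m).image (n - ·)) ∪ (if Odd k then {n / 2} else ∅) with hT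
  have hne : Odd k → Even n := by
    intro hk
    rcases Nat.even_mul.mp heven with h | h
    · exact absurd h (Nat.not_even_iff_odd.mpr hk)
    · exact h
  have hk1 : Odd k → 1 ≤ k := by rintro ⟨j, rfl⟩; omega
  -- every element of T lies in [1, n-1]
  have hmem : ∀ a ∈ T, 1 ≤ a ∧ a < n := by
    intro a ha
    rw [hT] at ha
    simp only [Finset.mem_union, Finset.mem_Icc, Finset.mem_image] at ha
    rcases ha with (⟨h1, h2⟩ | ⟨i, ⟨hi1, hi2⟩, rfl⟩) | ha
    · omega
    · omega
    · by_cases hk : Odd k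
      · rw [if_pos hk] at ha
        simp only [Finset.mem_singleton] at ha
        have := hne hk
        have := hk1 hk
        obtain ⟨j, hj⟩ := hne hk
        omega
      · rw [if_neg hk] at ha; simp at ha
  -- T is closed under a ↦ n - a
  have hsymm : ∀ a ∈ T, n - a ∈ T := by
    intro a ha
    rw [hT] at ha ⊢
    simp only [Finset.mem_union, Finset.mem_Icc, Finset.mem_image] at ha ⊢
    rcases ha with (⟨h1, h2⟩ | ⟨i, ⟨hi1, hi2⟩, rfl⟩) | ha
    · exact Or.inl (Or.inr ⟨a, ⟨h1, h2⟩, rfl⟩)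
    · left; left; omega
    · by_cases hk : Odd k
      · rw [if_pos hk] at ha ⊢
        simp only [Finset.mem_singleton] at ha ⊢
        obtain ⟨j, hj⟩ := hne hk
        omega
      · rw [if_neg hk] at ha; simp at ha
  -- cardinality of T is k
  have hcard : T.card = k := by
    have hmn : 2 * m < n := lt_of_le_of_lt h2m hkn
    have hinj : Set.InjOn (n - ·) (Finset.Icc 1 m) := by
      intro a ha b hb hab
      simp only [Finset.coe_Icc, Set.mem_Icc] at ha hb
      simp only at hab
      omega
    have hc1 : ((Finset.Icc 1 m).image (n - ·)).card = m := by
      rw [Finset.card_image_of_injOn hinj, Nat.card_Icc]; omega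
    have hd1 : Disjoint (Finset.Icc 1 m) ((Finset.Icc 1 m).image (n - ·)) := by
      rw [Finset.disjoint_left]
      intro a ha hb
      simp only [Finset.mem_Icc, Finset.mem_image] at ha hb
      obtain ⟨i, ⟨hi1, hi2⟩, rfl⟩ := hb
      omega
    have hc2 : (Finset.Icc 1 m ∪ (Finset.Icc 1 m).image (n - ·)).card = 2 * m := by
      rw [Finset.card_union_of_disjoint hd1, hc1, Nat.card_Icc]; omega
    by_cases hk : Odd k
    · have hkodd : k = 2 * m + 1 := by
        obtain ⟨j, hj⟩ := hk; omega
      obtain ⟨j, hj⟩ := hne hk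
      have hd2 : Disjoint (Finset.Icc 1 m ∪ (Finset.Icc 1 m).image (n - ·))
          ({n / 2} : Finset ℕ) := by
        rw [Finset.disjoint_right]
        intro a ha hb
        simp only [Finset.mem_singleton] at ha
        simp only [Finset.mem_union, Finset.mem_Icc, Finset.mem_image] at hb
        subst ha
        rcases hb with ⟨h1, h2⟩ | ⟨i, ⟨hi1, hi2⟩, h3⟩ <;> omega
      rw [hT, if_pos hk, Finset.card_union_of_disjoint hd2, hc2, Finset.card_singleton]
      omega
    · have : k = 2 * m := by
        rcases Nat.even_or_odd k with he | ho
        · obtain ⟨j, hj⟩ := he; omega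
        · exact absurd ho hk
      rw [hT, if_neg hk, Finset.union_empty, hc2]; omega
  -- cast to ZMod n
  set S : Finset (ZMod n) := T.image (Nat.cast : ℕ → ZMod n) with hS
  have hcastinj : ∀ a ∈ T, ∀ b ∈ T, (a : ZMod n) = (b : ZMod n) → a = b := by
    intro a ha b hb hab
    have ha' := hmem a ha
    have hb' := hmem b hb
    have h1 := ZMod.val_cast_of_lt ha'.2
    have h2 := ZMod.val_cast_of_lt hb'.2
    rw [hab] at h1
    omega
  have hScard : S.card = k := by
    rw [hS, Finset.card_image_of_injOn hcastinj, hcard]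
  have hS0 : (0 : ZMod n) ∉ S := by
    rw [hS]
    simp only [Finset.mem_image, not_exists]
    rintro a ⟨ha, ha0⟩
    have := hmem a ha
    have hv := ZMod.val_cast_of_lt (hmem a ha).2
    rw [ha0, ZMod.val_zero] at hv
    have := (hmem a ha).1
    omega
  have hSneg : ∀ s ∈ S, -s ∈ S := by
    intro s hs
    rw [hS] at hs ⊢
    simp only [Finset.mem_image] at hs ⊢
    obtain ⟨a, ha, rfl⟩ := hs
    refine ⟨n - a, hsymm a ha, ?_⟩
    have h1 : a ≤ n := (hmem a ha).2.le
    push_cast [Nat.cast_sub h1]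
    rw [ZMod.natCast_self]
    ring
  -- the graph
  refine ⟨⟨fun x y => x - y ∈ S, ?_, ?_⟩, ?_⟩
  · refine ⟨fun x y h => ?_⟩
    have : y - x = -(x - y) := by ring
    rw [this]
    exact hSneg _ h
  · refine ⟨fun x h => ?_⟩
    rw [sub_self] at h
    exact hS0 h
  · intro v
    have : Nat.card {s // s ∈ S} = k := by
      rw [Nat.card_eq_fintype_card, Fintype.card_coe, hScard]
    rw [← this]
    apply Nat.card_congr
    refine ⟨fun w => ⟨v - w.1, w.2⟩, fun s => ⟨v - s.1, ?_⟩, fun w => ?_, fun s => ?_⟩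
    · show v - (v - s.1) ∈ S
      rw [sub_sub_cancel]
      exact s.2
    · ext; simp [sub_sub_cancel]
    · ext; simp [sub_sub_cancel]

theorem stmt_1 (k n : ℕ) (hkn : k < n) (heven : Even (k * n)) :
    ∃ G : SimpleGraph (Fin n), ∀ v : Fin n, Nat.card (G.neighborSet v) = k := by
  obtain ⟨p, rfl⟩ : ∃ p, n = p + 1 := ⟨n - 1, by omega⟩
  exact aux_regular k (p + 1) hkn heven
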